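/- For integers 0 ≤ d ≤ D, the set 𝔾 = {P ∈ ℝ^{D×D} : P symmetric, 0 ⪯ P ⪯ I, Tr(P) = d} is the convex hull of the set of orthogonal projection matrices of rank d, i.e., the convex hull of {P ∈ ℝ^{D×D} : P = Pᵀ, P² = P, rank(P) = d}. -/

import Mathlib

open Matrix Finset

lemma sum01 {D : ℕ} {w : Fin D → ℝ} (h : ∀ i, w i = 0 ∨ w i = 1) :
    ∑ i, w i = ((Finset.univ.filter (fun i => w i ≠ 0)).card : ℝ) := by
  rw [← Finset.sum_boole]
  exact Finset.sum_congr rfl fun i _ => by rcases h i with h' | h' <;> simp [h']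

lemma hyp_mem_hull {D d : ℕ} :
    ∀ (n : ℕ) (x : Fin D → ℝ),
      (Finset.univ.filter fun i => x i ≠ 0 ∧ x i ≠ 1).card ≤ n →
      (∀ i, 0 ≤ x i) → (∀ i, x i ≤ 1) → ∑ i, x i = (d : ℝ) →
      x ∈ convexHull ℝ {v : Fin D → ℝ | (∀ i, v i = 0 ∨ v i = 1) ∧ ∑ i, v i = (d : ℝ)} := by
  intro n
  induction n with
  | zero =>
    intro x hcard h0 h1 hsum
    apply subset_convexHull
    refine ⟨fun i => ?_, hsum⟩
    have : i ∉ Finset.univ.filter fun i => x i ≠ 0 ∧ x i ≠ 1 := by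
      rw [Nat.le_zero, Finset.card_eq_zero] at hcard
      simp [hcard]
    simp only [Finset.mem_filter, Finset.mem_univ, true_and, not_and_or, not_not] at this
    tauto
  | succ n ih =>
    intro x hcard h0 h1 hsum
    by_cases hc : (Finset.univ.filter fun i => x i ≠ 0 ∧ x i ≠ 1).card ≤ n
    · exact ih x hc h0 h1 hsum
    · -- there is a fractional coordinate i
      have hne : (Finset.univ.filter fun i => x i ≠ 0 ∧ x i ≠ 1).Nonempty := by
        rw [Finset.nonempty_iff_ne_empty]
        intro h
        simp [h] at hc
      obtain ⟨i, hi⟩ := hne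
      rw [Finset.mem_filter] at hi
      obtain ⟨-, hi0, hi1⟩ := hi
      have hxi0 : 0 < x i := lt_of_le_of_ne (h0 i) (Ne.symm hi0)
      have hxi1 : x i < 1 := lt_of_le_of_ne (h1 i) hi1
      -- there is a second fractional coordinate j
      have hj : ∃ j, j ≠ i ∧ x j ≠ 0 ∧ x j ≠ 1 := by
        by_contra hcon
        push_neg at hcon
        have hall : ∀ j, j ≠ i → (x j = 0 ∨ x j = 1) := by
          intro j hji
          by_cases h'' : x j = 0
          · exact Or.inl h''
          · exact Or.inr (hcon j hji h'')
        have hsum2 : x i + ∑ j ∈ Finset.univ.erase i, x j = (d : ℝ) := by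
          rw [Finset.add_sum_erase _ _ (Finset.mem_univ i)] at *
          exact hsum
        have : ∑ j ∈ Finset.univ.erase i, x j
            = (((Finset.univ.erase i).filter (fun j => x j = 1)).card : ℝ) := by
          rw [← Finset.sum_boole]
          refine Finset.sum_congr rfl fun j hjmem => ?_
          rcases hall j (Finset.ne_of_mem_erase hjmem) with h' | h' <;> simp [h']
        set m := ((Finset.univ.erase i).filter (fun j => x j = 1)).card
        rw [this] at hsum2
        rcases lt_or_ge m d with hmd | hmd
        · have : (m : ℝ) + 1 ≤ (d : ℝ) := by exact_mod_cast hmd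
          linarith
        · have : (d : ℝ) ≤ (m : ℝ) := by exact_mod_cast hmd
          linarith
      obtain ⟨j, hji, hj0, hj1⟩ := hj
      have hxj0 : 0 < x j := lt_of_le_of_ne (h0 j) (Ne.symm hj0)
      have hxj1 : x j < 1 := lt_of_le_of_ne (h1 j) hj1
      set t1 := min (x i) (1 - x j) with ht1def
      set t2 := min (1 - x i) (x j) with ht2def
      have ht1 : 0 < t1 := lt_min hxi0 (by linarith)
      have ht2 : 0 < t2 := lt_min (by linarith) hxj0
      have ht1a : t1 ≤ x i := min_le_left _ _
      have ht1b : t1 ≤ 1 - x j := min_le_right _ _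
      have ht2a : t2 ≤ 1 - x i := min_le_left _ _
      have ht2b : t2 ≤ x j := min_le_right _ _
      set y := x + t1 • (Pi.single j (1:ℝ) - Pi.single i 1) with hydef
      set z := x + t2 • (Pi.single i (1:ℝ) - Pi.single j 1) with hzdef
      have hyk : ∀ k, k ≠ i → k ≠ j → y k = x k := by
        intro k hki hkj
        simp [hydef, Pi.single_apply, hki, hkj]
      have hzk : ∀ k, k ≠ i → k ≠ j → z k = x k := by
        intro k hki hkj
        simp [hzdef, Pi.single_apply, hki, hkj]
      have hyi : y i = x i - t1 := by
        simp [hydef, Pi.single_apply, hji.symm]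
        ring
      have hyj : y j = x j + t1 := by
        simp [hydef, Pi.single_apply, hji]
      have hzi : z i = x i + t2 := by
        simp [hzdef, Pi.single_apply, hji.symm]
      have hzj : z j = x j - t2 := by
        simp [hzdef, Pi.single_apply, hji]
        ring
      -- membership data for y and z
      have hy0 : ∀ k, 0 ≤ y k := by
        intro k
        by_cases hki : k = i
        · subst hki; rw [hyi]; linarith
        · by_cases hkj : k = j
          · subst hkj; rw [hyj]; linarith
          · rw [hyk k hki hkj]; exact h0 k
      have hy1 : ∀ k, y k ≤ 1 := by
        intro k
        by_cases hki : k = i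
        · subst hki; rw [hyi]; linarith [h1 k]
        · by_cases hkj : k = j
          · subst hkj; rw [hyj]; linarith
          · rw [hyk k hki hkj]; exact h1 k
      have hz0 : ∀ k, 0 ≤ z k := by
        intro k
        by_cases hki : k = i
        · subst hki; rw [hzi]; linarith
        · by_cases hkj : k = j
          · subst hkj; rw [hzj]; linarith
          · rw [hzk k hki hkj]; exact h0 k
      have hz1 : ∀ k, z k ≤ 1 := by
        intro k
        by_cases hki : k = i
        · subst hki; rw [hzi]; linarith
        · by_cases hkj : k = j
          · subst hkj; rw [hzj]; linarith [h1 k]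
          · rw [hzk k hki hkj]; exact h1 k
      have hsy : ∑ k, y k = (d : ℝ) := by
        simp only [hydef, Pi.add_apply, Pi.smul_apply, Pi.sub_apply, smul_eq_mul,
          Finset.sum_add_distrib, mul_sub, Finset.sum_sub_distrib, ← Finset.mul_sum]
        rw [Finset.sum_pi_single' j (1:ℝ), Finset.sum_pi_single' i (1:ℝ)]
        simp [hsum]
      have hsz : ∑ k, z k = (d : ℝ) := by
        simp only [hzdef, Pi.add_apply, Pi.smul_apply, Pi.sub_apply, smul_eq_mul,
          Finset.sum_add_distrib, mul_sub, Finset.sum_sub_distrib, ← Finset.mul_sum]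
        rw [Finset.sum_pi_single' j (1:ℝ), Finset.sum_pi_single' i (1:ℝ)]
        simp [hsum]
      -- the fractional supports of y and z are strictly smaller
      have hsuby : (Finset.univ.filter fun k => y k ≠ 0 ∧ y k ≠ 1)
          ⊆ (Finset.univ.filter fun k => x k ≠ 0 ∧ x k ≠ 1) := by
        intro k hk
        rw [Finset.mem_filter] at hk ⊢
        refine ⟨Finset.mem_univ k, ?_⟩
        by_cases hki : k = i
        · subst hki; exact ⟨hi0, hi1⟩
        · by_cases hkj : k = j
          · subst hkj; exact ⟨hj0, hj1⟩
          · rw [hyk k hki hkj] at hk; exact hk.2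
      have hsubz : (Finset.univ.filter fun k => z k ≠ 0 ∧ z k ≠ 1)
          ⊆ (Finset.univ.filter fun k => x k ≠ 0 ∧ x k ≠ 1) := by
        intro k hk
        rw [Finset.mem_filter] at hk ⊢
        refine ⟨Finset.mem_univ k, ?_⟩
        by_cases hki : k = i
        · subst hki; exact ⟨hi0, hi1⟩
        · by_cases hkj : k = j
          · subst hkj; exact ⟨hj0, hj1⟩
          · rw [hzk k hki hkj] at hk; exact hk.2
      have hcardx : (Finset.univ.filter fun k => x k ≠ 0 ∧ x k ≠ 1).card ≤ n + 1 := hcard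
      have hy_card : (Finset.univ.filter fun k => y k ≠ 0 ∧ y k ≠ 1).card ≤ n := by
        have hwit : ∃ k, k ∈ (Finset.univ.filter fun k => x k ≠ 0 ∧ x k ≠ 1) ∧
            k ∉ (Finset.univ.filter fun k => y k ≠ 0 ∧ y k ≠ 1) := by
          rcases min_choice (x i) (1 - x j) with hm | hm
          · refine ⟨i, by simp [hi0, hi1], ?_⟩
            have : y i = 0 := by rw [hyi, ht1def, hm]; ring
            simp [this]
          · refine ⟨j, by simp [hj0, hj1], ?_⟩
            have : y j = 1 := by rw [hyj, ht1def, hm]; ring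
            simp [this]
        obtain ⟨k, hk1, hk2⟩ := hwit
        have : (Finset.univ.filter fun k => y k ≠ 0 ∧ y k ≠ 1).card
            < (Finset.univ.filter fun k => x k ≠ 0 ∧ x k ≠ 1).card :=
          Finset.card_lt_card (Finset.ssubset_iff_of_subset hsuby |>.mpr ⟨k, hk1, hk2⟩)
        omega
      have hz_card : (Finset.univ.filter fun k => z k ≠ 0 ∧ z k ≠ 1).card ≤ n := by
        have hwit : ∃ k, k ∈ (Finset.univ.filter fun k => x k ≠ 0 ∧ x k ≠ 1) ∧
            k ∉ (Finset.univ.filter fun k => z k ≠ 0 ∧ z k ≠ 1) := by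
          rcases min_choice (1 - x i) (x j) with hm | hm
          · refine ⟨i, by simp [hi0, hi1], ?_⟩
            have : z i = 1 := by rw [hzi, ht2def, hm]; ring
            simp [this]
          · refine ⟨j, by simp [hj0, hj1], ?_⟩
            have : z j = 0 := by rw [hzj, ht2def, hm]; ring
            simp [this]
        obtain ⟨k, hk1, hk2⟩ := hwit
        have : (Finset.univ.filter fun k => z k ≠ 0 ∧ z k ≠ 1).card
            < (Finset.univ.filter fun k => x k ≠ 0 ∧ x k ≠ 1).card :=
          Finset.card_lt_card (Finset.ssubset_iff_of_subset hsubz |>.mpr ⟨k, hk1, hk2⟩)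
        omega
      have hy := ih y hy_card hy0 hy1 hsy
      have hz := ih z hz_card hz0 hz1 hsz
      -- x is a convex combination of y and z
      set c := t2 / (t1 + t2) with hcdef
      have hs : 0 < t1 + t2 := by linarith
      have hc0 : 0 ≤ c := div_nonneg ht2.le hs.le
      have hc1 : 0 ≤ 1 - c := by
        have : c ≤ 1 := (div_le_one hs).mpr (by linarith)
        linarith
      have hct : c * t1 = (1 - c) * t2 := by
        rw [hcdef]
        field_simp
        ring
      have key : c • y + (1 - c) • z = x := by
        funext k
        simp only [hydef, hzdef, Pi.add_apply, Pi.smul_apply, Pi.sub_apply,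
          Pi.single_apply, smul_eq_mul]
        linear_combination ((if k = j then (1:ℝ) else 0) - (if k = i then (1:ℝ) else 0)) * hct
      rw [← key]
      exact convex_convexHull ℝ _ hy hz hc0 hc1 (by ring)

lemma proj_mem {D d : ℕ} (U : Matrix.unitaryGroup (Fin D) ℝ) (ε : Fin D → ℝ)
    (hε : ∀ i, ε i = 0 ∨ ε i = 1) (hsum : ∑ i, ε i = (d : ℝ)) :
    ((U : Matrix (Fin D) (Fin D) ℝ) * diagonal ε * star (U : Matrix (Fin D) (Fin D) ℝ)) ∈
      {P : Matrix (Fin D) (Fin D) ℝ | P.IsSymm ∧ P * P = P ∧ P.rank = d} := by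
  have hsU : star (U : Matrix (Fin D) (Fin D) ℝ) * U = 1 := UnitaryGroup.star_mul_self U
  have hdd : diagonal ε * diagonal ε = diagonal ε := by
    have hfun : (fun i => ε i * ε i) = ε := funext fun i => by
      rcases hε i with h' | h' <;> simp [h']
    rw [diagonal_mul_diagonal, hfun]
  refine ⟨?_, ?_, ?_⟩
  · -- symmetric
    have hherm : ((U : Matrix (Fin D) (Fin D) ℝ) * diagonal ε *
        star (U : Matrix (Fin D) (Fin D) ℝ)).IsHermitian := by
      rw [Matrix.star_eq_conjTranspose]
      exact isHermitian_mul_mul_conjTranspose _ (isHermitian_diagonal ε)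
    rwa [Matrix.IsHermitian, conjTranspose_eq_transpose_of_trivial] at hherm
  · -- idempotent
    calc (U : Matrix (Fin D) (Fin D) ℝ) * diagonal ε * star (U : Matrix (Fin D) (Fin D) ℝ) *
        ((U : Matrix (Fin D) (Fin D) ℝ) * diagonal ε * star (U : Matrix (Fin D) (Fin D) ℝ))
        = (U : Matrix (Fin D) (Fin D) ℝ) * diagonal ε *
          (star (U : Matrix (Fin D) (Fin D) ℝ) * U) * diagonal ε *
          star (U : Matrix (Fin D) (Fin D) ℝ) := by
          simp only [mul_assoc]
      _ = (U : Matrix (Fin D) (Fin D) ℝ) * diagonal ε * star (U : Matrix (Fin D) (Fin D) ℝ) := by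
          rw [hsU, mul_one, mul_assoc _ (diagonal ε) (diagonal ε), hdd]
  · -- rank
    have hdet : IsUnit (U : Matrix (Fin D) (Fin D) ℝ).det := UnitaryGroup.det_isUnit U
    have hdets : IsUnit (star (U : Matrix (Fin D) (Fin D) ℝ)).det := by
      rw [Matrix.star_eq_conjTranspose, det_conjTranspose]
      exact hdet.star
    rw [mul_assoc, rank_mul_eq_right_of_isUnit_det _ _ hdet,
      rank_mul_eq_left_of_isUnit_det _ _ hdets, rank_diagonal]
    have := sum01 hε
    rw [hsum] at this
    have hcard : (Finset.univ.filter (fun i => ε i ≠ 0)).card = d := by exact_mod_cast this.symm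
    rw [Fintype.card_subtype]
    exact hcard

lemma eig_le_one {D : ℕ} {P : Matrix (Fin D) (Fin D) ℝ} (hH : P.IsHermitian)
    (hIP : ((1 : Matrix (Fin D) (Fin D) ℝ) - P).PosSemidef) (i : Fin D) :
    hH.eigenvalues i ≤ 1 := by
  set v := ⇑(hH.eigenvectorBasis i) with hv
  have hv0 : v ≠ 0 := by
    intro h; apply hH.eigenvectorBasis.orthonormal.ne_zero i; ext k; simpa using congrFun h k
  have hmul : P *ᵥ v = hH.eigenvalues i • v := hH.mulVec_eigenvectorBasis i
  have hps := hIP.dotProduct_mulVec_nonneg v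
  rw [sub_mulVec, one_mulVec, hmul, dotProduct_sub, dotProduct_smul] at hps
  have hvv : 0 < star v ⬝ᵥ v := by
    rw [show star v = v from funext fun k => by simp]
    have : v ⬝ᵥ v = star v ⬝ᵥ v := by
      rw [show star v = v from funext fun k => by simp]
    rw [this]
    exact dotProduct_star_self_pos_iff.mpr hv0
  have : hH.eigenvalues i • (star v ⬝ᵥ v) = hH.eigenvalues i * (star v ⬝ᵥ v) := rfl
  rw [this] at hps
  nlinarith

lemma trace_eq_sum_eig {D : ℕ} {P : Matrix (Fin D) (Fin D) ℝ} (hH : P.IsHermitian) :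
    P.trace = ∑ i, hH.eigenvalues i := by
  conv_lhs => rw [hH.spectral_theorem]
  rw [Unitary.conjStarAlgAut_apply, Matrix.trace_mul_cycle, UnitaryGroup.star_mul_self hH.eigenvectorUnitary, one_mul,
    trace_diagonal]
  simp

lemma idem_trace {D d : ℕ} {Q : Matrix (Fin D) (Fin D) ℝ} (hH : Q.IsHermitian)
    (hq : Q * Q = Q) (hr : Q.rank = d) : Q.trace = (d : ℝ) := by
  have hUs : (hH.eigenvectorUnitary : Matrix (Fin D) (Fin D) ℝ) *
      star (hH.eigenvectorUnitary : Matrix (Fin D) (Fin D) ℝ) = 1 :=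
    Matrix.mem_unitaryGroup_iff.mp hH.eigenvectorUnitary.2
  have hdiag : star (hH.eigenvectorUnitary : Matrix (Fin D) (Fin D) ℝ) * Q *
      (hH.eigenvectorUnitary : Matrix (Fin D) (Fin D) ℝ) = diagonal hH.eigenvalues := by
    simpa using hH.conjStarAlgAut_star_eigenvectorUnitary
  have hDD : diagonal hH.eigenvalues * diagonal hH.eigenvalues
      = diagonal hH.eigenvalues := by
    conv_lhs => rw [← hdiag]
    calc (star (hH.eigenvectorUnitary : Matrix (Fin D) (Fin D) ℝ) * Q * (hH.eigenvectorUnitary : Matrix (Fin D) (Fin D) ℝ)) *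
          (star (hH.eigenvectorUnitary : Matrix (Fin D) (Fin D) ℝ) * Q * (hH.eigenvectorUnitary : Matrix (Fin D) (Fin D) ℝ))
        = star (hH.eigenvectorUnitary : Matrix (Fin D) (Fin D) ℝ) * Q *
            ((hH.eigenvectorUnitary : Matrix (Fin D) (Fin D) ℝ) *
              star (hH.eigenvectorUnitary : Matrix (Fin D) (Fin D) ℝ)) * Q *
            (hH.eigenvectorUnitary : Matrix (Fin D) (Fin D) ℝ) := by simp only [mul_assoc]
      _ = star (hH.eigenvectorUnitary : Matrix (Fin D) (Fin D) ℝ) * Q * (hH.eigenvectorUnitary : Matrix (Fin D) (Fin D) ℝ) := by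
          rw [hUs, mul_one, mul_assoc _ Q Q, hq]
      _ = diagonal hH.eigenvalues := hdiag
  have heig : ∀ i, hH.eigenvalues i = 0 ∨ hH.eigenvalues i = 1 := by
    intro i
    have h3 : diagonal (fun k => hH.eigenvalues k * hH.eigenvalues k) = diagonal hH.eigenvalues := by
      rw [← diagonal_mul_diagonal]; exact hDD
    have h2 := congrFun (diagonal_injective h3) i
    exact eq_zero_or_one_of_sq_eq_self (by rw [sq]; exact h2)
  rw [trace_eq_sum_eig hH, sum01 heig]
  rw [hH.rank_eq_card_non_zero_eigs, Fintype.card_subtype] at hr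
  exact_mod_cast congrArg (Nat.cast (R := ℝ)) hr

/-- For integers `0 ≤ d ≤ D`, the set
`𝔾 = {P ∈ ℝ^{D×D} : P symmetric, 0 ⪯ P ⪯ I, Tr P = d}` is the convex hull of the set of
orthogonal projection matrices of rank `d`, i.e., of
`{P : P = Pᵀ, P² = P, rank P = d}`. -/
theorem reaper_set_eq_convexHull_projections (D d : ℕ) (hdD : d ≤ D) :
    {P : Matrix (Fin D) (Fin D) ℝ |
        P.IsSymm ∧ P.PosSemidef ∧ ((1 : Matrix (Fin D) (Fin D) ℝ) - P).PosSemidef ∧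
        P.trace = (d : ℝ)} =
      convexHull ℝ
        {P : Matrix (Fin D) (Fin D) ℝ | P.IsSymm ∧ P * P = P ∧ P.rank = d} := by
  apply Set.Subset.antisymm
  · -- forward: every element of 𝔾 is in the convex hull
    rintro P ⟨hSym, hPSD, hIP, htr⟩
    have hH : P.IsHermitian := hPSD.isHermitian
    have h0 : ∀ i, 0 ≤ hH.eigenvalues i := fun i => hPSD.eigenvalues_nonneg i
    have h1 : ∀ i, hH.eigenvalues i ≤ 1 := eig_le_one hH hIP
    have hsum : ∑ i, hH.eigenvalues i = (d : ℝ) := by rw [← trace_eq_sum_eig hH, htr]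
    have hmem := hyp_mem_hull (D := D) (d := d) _ hH.eigenvalues le_rfl h0 h1 hsum
    have hlin : IsLinearMap ℝ (fun x : Fin D → ℝ =>
        (hH.eigenvectorUnitary : Matrix (Fin D) (Fin D) ℝ) * diagonal x *
          star (hH.eigenvectorUnitary : Matrix (Fin D) (Fin D) ℝ)) := by
      constructor
      · intro a b
        have hd : diagonal (a + b) = diagonal a + diagonal b := by
          ext i j
          by_cases h : i = j <;> simp [diagonal_apply, h]
        rw [hd, Matrix.mul_add, Matrix.add_mul]
      · intro c a
        have hd : diagonal (c • a) = c • diagonal a := by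
          ext i j
          by_cases h : i = j <;> simp [diagonal_apply, h]
        rw [hd, Matrix.mul_smul, Matrix.smul_mul]
    have hPeq : P = (hH.eigenvectorUnitary : Matrix (Fin D) (Fin D) ℝ) *
        diagonal hH.eigenvalues * star (hH.eigenvectorUnitary : Matrix (Fin D) (Fin D) ℝ) := by
      simpa using hH.spectral_theorem
    have himg : P ∈ (fun x : Fin D → ℝ =>
        (hH.eigenvectorUnitary : Matrix (Fin D) (Fin D) ℝ) * diagonal x *
          star (hH.eigenvectorUnitary : Matrix (Fin D) (Fin D) ℝ)) ''
        (convexHull ℝ {v : Fin D → ℝ | (∀ i, v i = 0 ∨ v i = 1) ∧ ∑ i, v i = (d : ℝ)}) :=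
      ⟨hH.eigenvalues, hmem, hPeq.symm⟩
    rw [hlin.image_convexHull] at himg
    refine convexHull_mono ?_ himg
    rintro _ ⟨ε, ⟨hε01, hεs⟩, rfl⟩
    exact proj_mem hH.eigenvectorUnitary ε hε01 hεs
  · -- reverse: the convex hull is contained in 𝔾
    apply convexHull_min
    · rintro Q ⟨hs, hq, hrk⟩
      have hH : Q.IsHermitian := by
        rwa [Matrix.IsHermitian, conjTranspose_eq_transpose_of_trivial]
      have hPSD : Q.PosSemidef := by
        have h := posSemidef_conjTranspose_mul_self Q
        rwa [hH, hq] at h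
      have h1H : ((1 : Matrix (Fin D) (Fin D) ℝ) - Q).IsHermitian :=
        Matrix.isHermitian_one.sub hH
      have h1q : ((1 : Matrix (Fin D) (Fin D) ℝ) - Q) * (1 - Q) = 1 - Q := by
        rw [sub_mul, one_mul, mul_sub, mul_one, hq]
        abel
      have h1PSD : ((1 : Matrix (Fin D) (Fin D) ℝ) - Q).PosSemidef := by
        have h := posSemidef_conjTranspose_mul_self ((1 : Matrix (Fin D) (Fin D) ℝ) - Q)
        rwa [h1H, h1q] at h
      exact ⟨hs, hPSD, h1PSD, idem_trace hH hq hrk⟩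
    · -- 𝔾 is convex
      intro A hA B hB a b ha hb hab
      obtain ⟨hAs, hAp, hAi, hAt⟩ := hA
      obtain ⟨hBs, hBp, hBi, hBt⟩ := hB
      have smulPSD : ∀ (c : ℝ) (M : Matrix (Fin D) (Fin D) ℝ), 0 ≤ c → M.PosSemidef →
          (c • M).PosSemidef := by
        intro c M hc hM
        refine PosSemidef.of_dotProduct_mulVec_nonneg ?_ fun x => ?_
        · rw [Matrix.IsHermitian, conjTranspose_smul, star_trivial, hM.1]
        · rw [smul_mulVec, dotProduct_smul, smul_eq_mul]
          exact mul_nonneg hc (hM.dotProduct_mulVec_nonneg x)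
      refine ⟨?_, ?_, ?_, ?_⟩
      · rw [Matrix.IsSymm, transpose_add, transpose_smul, transpose_smul, hAs, hBs]
      · exact (smulPSD a A ha hAp).add (smulPSD b B hb hBp)
      · have key : (1 : Matrix (Fin D) (Fin D) ℝ) - (a • A + b • B)
            = a • (1 - A) + b • (1 - B) := by
          calc (1 : Matrix (Fin D) (Fin D) ℝ) - (a • A + b • B)
              = (a + b) • (1 : Matrix (Fin D) (Fin D) ℝ) - (a • A + b • B) := by
                rw [hab, one_smul]
            _ = a • (1 - A) + b • (1 - B) := by
                rw [add_smul, smul_sub, smul_sub]; abel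
        rw [key]
        exact (smulPSD a _ ha hAi).add (smulPSD b _ hb hBi)
      · rw [trace_add, trace_smul, trace_smul, hAt, hBt, smul_eq_mul, smul_eq_mul]
        linear_combination (d : ℝ) * hab
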